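/- Fix $b > 0$ and $a \in \mathbb{R}$ with $a > 0$, and consider the ODE $x'(t) = r(t)(e^{c_1(t-t_0)} - e^{-c_2(t-t_0)} x(t)^2)$ where $r(t) = L/(1 - e^{L(t-t_0)})$, $c_1 > 0 > c_2$, $L = c_1 - c_2$, on $t < t_0$. The substitution $v(t) = -r(t) e^{-c_2(t-t_0)} x(t)$ transforms the equation into the Riccati equation $v'(t) = -R'(t) + R(t) v(t) + v(t)^2$ with $R(t) = (c_1 e^{L(t-t_0)} - c_2)/(1 - e^{L(t-t_0)})$. -/

import Mathlib

open Real

theorem riccati_transformation (c₁ c₂ t₀ : ℝ) (hc₁ : c₁ > 0) (hc₂ : 0 > c₂)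
    (L : ℝ) (hL : L = c₁ - c₂)
    (r R R' : ℝ → ℝ)
    (hr : ∀ t, r t = L / (1 - exp (L * (t - t₀))))
    (hR : ∀ t, R t = (c₁ * exp (L * (t - t₀)) - c₂) / (1 - exp (L * (t - t₀))))
    (hR' : ∀ t, R' t = L ^ 2 * exp (L * (t - t₀)) / (1 - exp (L * (t - t₀))) ^ 2)
    (x : ℝ → ℝ)
    (hx : ∀ t < t₀, HasDerivAt x
      (r t * (exp (c₁ * (t - t₀)) - exp (-c₂ * (t - t₀)) * (x t) ^ 2)) t)
    (v : ℝ → ℝ)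
    (hv : ∀ t, v t = -r t * exp (-c₂ * (t - t₀)) * x t) :
    ∀ t < t₀, HasDerivAt v (-R' t + R t * v t + (v t) ^ 2) t := by
  intro t ht
  have hLpos : L > 0 := by rw [hL]; linarith
  have hElt : exp (L * (t - t₀)) < 1 := by
    rw [← Real.exp_zero]
    exact Real.exp_lt_exp.mpr (by nlinarith)
  have hD : 1 - exp (L * (t - t₀)) ≠ 0 := by linarith
  have h1 : HasDerivAt (fun s => L * (s - t₀)) L t := by
    simpa using ((hasDerivAt_id t).sub_const t₀).const_mul L
  have hEexp : HasDerivAt (fun s => exp (L * (s - t₀))) (exp (L * (t - t₀)) * L) t := h1.exp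
  have hDen : HasDerivAt (fun s => 1 - exp (L * (s - t₀))) (-(exp (L * (t - t₀)) * L)) t := by
    exact hEexp.const_sub 1
  have hrD : HasDerivAt (fun s => L / (1 - exp (L * (s - t₀))))
      ((0 * (1 - exp (L * (t - t₀))) - L * -(exp (L * (t - t₀)) * L)) /
        (1 - exp (L * (t - t₀))) ^ 2) t :=
    (hasDerivAt_const t L).div hDen hD
  have h2 : HasDerivAt (fun s => -c₂ * (s - t₀)) (-c₂) t := by
    simpa using ((hasDerivAt_id t).sub_const t₀).const_mul (-c₂)
  have hB : HasDerivAt (fun s => exp (-c₂ * (s - t₀))) (exp (-c₂ * (t - t₀)) * -c₂) t := h2.exp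
  have hxd := hx t ht
  have hveq : v = fun s => -(L / (1 - exp (L * (s - t₀))) * exp (-c₂ * (s - t₀)) * x s) := by
    funext s; rw [hv s, hr s]; ring
  rw [hveq]
  have hprod := (((hrD.mul hB).mul hxd).neg)
  refine HasDerivAt.congr_deriv hprod ?_
  symm
  have hexpE : exp (L * (t - t₀)) = exp (c₁ * (t - t₀)) * exp (-c₂ * (t - t₀)) := by
    rw [← Real.exp_add, hL]; ring_nf
  simp only [hR', hR, hr, Pi.mul_apply]
  rw [hexpE] at hD ⊢
  rw [hL]
  generalize exp (c₁ * (t - t₀)) = a at *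
  generalize exp (-c₂ * (t - t₀)) = b at *
  field_simp
  ring
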